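/- Let f be a one-dimensional log-concave probability density with mean 0 and variance σ², and let μ⁺ = E_f[Y | Y ≥ 0]. Then there exist universal constants c_1, c_2 > 0 (independent of f) such that c_1 σ ≤ μ⁺ ≤ c_2 σ. -/

import Mathlib

open MeasureTheory Set Filter


lemma poly_deriv (β x : ℝ) :
    HasDerivAt (fun x : ℝ => β * x ^ 2 + 2 * β ^ 2 * x + 2 * β ^ 3) (2 * β * x + 2 * β ^ 2) x := by
  have h := (((hasDerivAt_pow 2 x).const_mul β).add
    ((hasDerivAt_id x).const_mul (2 * β ^ 2))).add_const (2 * β ^ 3)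
  refine h.congr_deriv ?_
  push_cast
  ring

lemma expTail (c β : ℝ) (hβ : 0 < β) :
    IntegrableOn (fun x => x ^ 2 * Real.exp (-(x - c) / β)) (Ioi c) ∧
    ∫ x in Ioi c, x ^ 2 * Real.exp (-(x - c) / β) = β * c ^ 2 + 2 * β ^ 2 * c + 2 * β ^ 3 := by
  set g : ℝ → ℝ := fun x => -(β * x ^ 2 + 2 * β ^ 2 * x + 2 * β ^ 3) * Real.exp (-(x - c) / β) with hg
  have hderiv : ∀ x, HasDerivAt g (x ^ 2 * Real.exp (-(x - c) / β)) x := by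
    intro x
    have h1 : HasDerivAt (fun x : ℝ => -(x - c) / β) (-1 / β) x := by
      simpa using (((hasDerivAt_id x).sub_const c).neg).div_const β
    have hE : HasDerivAt (fun x : ℝ => Real.exp (-(x - c) / β))
        (Real.exp (-(x - c) / β) * (-1 / β)) x := (Real.hasDerivAt_exp _).comp x h1
    have := ((poly_deriv β x).neg).mul hE
    refine this.congr_deriv ?_
    simp only [Pi.neg_apply]
    field_simp
    ring
  have hpos : ∀ x ∈ Ioi c, 0 ≤ x ^ 2 * Real.exp (-(x - c) / β) := fun x _ =>
    mul_nonneg (sq_nonneg x) (Real.exp_pos _).le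
  have htend : Tendsto g atTop (nhds 0) := by
    have base : Tendsto (fun y : ℝ => -(β ^ 3 * (y ^ 2 * Real.exp (-y)) * Real.exp (c / β)
        + 2 * β ^ 3 * (y ^ 1 * Real.exp (-y)) * Real.exp (c / β)
        + 2 * β ^ 3 * (y ^ 0 * Real.exp (-y)) * Real.exp (c / β))) atTop (nhds 0) := by
      have h2 := Real.tendsto_pow_mul_exp_neg_atTop_nhds_zero 2
      have h1 := Real.tendsto_pow_mul_exp_neg_atTop_nhds_zero 1
      have h0 := Real.tendsto_pow_mul_exp_neg_atTop_nhds_zero 0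
      have := ((((h2.const_mul (β ^ 3)).mul_const (Real.exp (c / β))).add
        ((h1.const_mul (2 * β ^ 3)).mul_const (Real.exp (c / β)))).add
        ((h0.const_mul (2 * β ^ 3)).mul_const (Real.exp (c / β)))).neg
      simpa using this
    have hcomp : Tendsto (fun x : ℝ => x / β) atTop atTop :=
      tendsto_id.atTop_div_const hβ
    have := base.comp hcomp
    apply this.congr
    intro x
    show -(β ^ 3 * ((x / β) ^ 2 * Real.exp (-(x / β))) * Real.exp (c / β)
        + 2 * β ^ 3 * ((x / β) ^ 1 * Real.exp (-(x / β))) * Real.exp (c / β)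
        + 2 * β ^ 3 * ((x / β) ^ 0 * Real.exp (-(x / β))) * Real.exp (c / β)) = g x
    have hc : Real.exp (-(x / β)) * Real.exp (c / β) = Real.exp (-(x - c) / β) := by
      rw [← Real.exp_add]; ring_nf
    have key : β ^ 3 * ((x / β) ^ 2 * Real.exp (-(x / β))) * Real.exp (c / β)
        + 2 * β ^ 3 * ((x / β) ^ 1 * Real.exp (-(x / β))) * Real.exp (c / β)
        + 2 * β ^ 3 * ((x / β) ^ 0 * Real.exp (-(x / β))) * Real.exp (c / β)
        = (β * x ^ 2 + 2 * β ^ 2 * x + 2 * β ^ 3) * (Real.exp (-(x / β)) * Real.exp (c / β)) := by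
      field_simp
    rw [key, hc]
    ring
  have h2 := integral_Ioi_of_hasDerivAt_of_nonneg' (g' := fun x => x ^ 2 * Real.exp (-(x - c) / β))
    (fun x _ => hderiv x) hpos htend
  have h3 := integrableOn_Ioi_deriv_of_nonneg' (g' := fun x => x ^ 2 * Real.exp (-(x - c) / β))
    (fun x _ => hderiv x) hpos htend
  refine ⟨h3, ?_⟩
  rw [h2, hg]
  simp [Real.exp_zero]


lemma tail_bound (f : ℝ → ℝ) (hpos : ∀ x, 0 ≤ f x)
    (hlc : ∀ x y (l : ℝ), 0 ≤ l → l ≤ 1 →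
      f (l * x + (1 - l) * y) ≥ f x ^ l * f y ^ (1 - l))
    (hint : Integrable f) (hone : (∫ x, f x) = 1)
    (hintabs : Integrable (fun x => |x| * f x))
    (t : ℝ) (ht : 0 < t) (hI : (∫ x, |x| * f x) ≤ t / 2) :
    ∀ x, 11 * t ≤ x → f x ≤ 1 / (16 * t) * Real.exp (-(x - 11 * t) / (18 * t)) := by
  have habsnn : ∀ x, 0 ≤ |x| * f x := fun x => mul_nonneg (abs_nonneg x) (hpos x)
  -- mass outside [-t,t] is at most 1/2
  have houter : ∫ x in (Icc (-t) t)ᶜ, f x ≤ 1 / 2 := by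
    have h1 : ∫ x in (Icc (-t) t)ᶜ, f x ≤ ∫ x in (Icc (-t) t)ᶜ, |x| * f x / t := by
      apply setIntegral_mono_on hint.integrableOn (hintabs.div_const t).integrableOn
        measurableSet_Icc.compl
      intro x hx
      simp only [mem_compl_iff, mem_Icc, not_and_or, not_le] at hx
      have hxt : t ≤ |x| := by
        rcases hx with h | h
        · rw [abs_of_neg (by linarith)]; linarith
        · rw [abs_of_pos (by linarith)]; linarith
      rw [le_div_iff₀ ht]
      calc f x * t = t * f x := by ring
        _ ≤ |x| * f x := mul_le_mul_of_nonneg_right hxt (hpos x)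
    have h4 : ∫ x in (Icc (-t) t)ᶜ, |x| * f x ≤ t / 2 :=
      le_trans (setIntegral_le_integral hintabs (Eventually.of_forall habsnn)) hI
    have h2 : ∫ x in (Icc (-t) t)ᶜ, |x| * f x / t ≤ 1 / 2 := by
      rw [integral_div]
      rw [div_le_iff₀ ht]
      calc (∫ x in (Icc (-t) t)ᶜ, |x| * f x) ≤ t / 2 := h4
        _ = 1 / 2 * t := by ring
    linarith
  have hinner : 1 / 2 ≤ ∫ x in Icc (-t) t, f x := by
    have := integral_add_compl (measurableSet_Icc : MeasurableSet (Icc (-t) t)) hint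
    rw [hone] at this
    linarith
  -- existence of x₀ with f x₀ ≥ 1/(8t)
  obtain ⟨x₀, hx₀mem, hx₀⟩ : ∃ x₀ ∈ Icc (-t) t, 1 / (8 * t) ≤ f x₀ := by
    by_contra hcon
    push_neg at hcon
    have hb : ∫ x in Icc (-t) t, f x ≤ ∫ x in Icc (-t) t, (fun _ => 1 / (8 * t)) x := by
      apply setIntegral_mono_on hint.integrableOn
        (integrableOn_const (by rw [Real.volume_Icc]; exact ENNReal.ofReal_ne_top))
        measurableSet_Icc (fun x hx => (hcon x hx).le)
    rw [setIntegral_const, Real.volume_real_Icc_of_le (by linarith), smul_eq_mul] at hb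
    have : (t - -t) * (1 / (8 * t)) = 1 / 4 := by field_simp; ring
    rw [this] at hb
    linarith
  -- existence of a in [2t,11t] with f a ≤ 1/(16t)
  obtain ⟨a, hamem, ha⟩ : ∃ a ∈ Icc (2 * t) (11 * t), f a ≤ 1 / (16 * t) := by
    by_contra hcon
    push_neg at hcon
    have hsub : Icc (2 * t) (11 * t) ⊆ (Icc (-t) t)ᶜ := by
      intro x hx
      simp only [mem_compl_iff, mem_Icc, not_and_or, not_le]
      right
      rcases hx with ⟨h1, _⟩
      linarith
    have hb1 : ∫ x in Icc (2 * t) (11 * t), f x ≤ ∫ x in (Icc (-t) t)ᶜ, f x := by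
      apply setIntegral_mono_set hint.integrableOn
        (Eventually.of_forall fun x => hpos x)
      exact HasSubset.Subset.eventuallyLE hsub
    have hb2 : ∫ x in Icc (2 * t) (11 * t), (fun _ => 1 / (16 * t)) x
        ≤ ∫ x in Icc (2 * t) (11 * t), f x := by
      apply setIntegral_mono_on
        (integrableOn_const (by rw [Real.volume_Icc]; exact ENNReal.ofReal_ne_top)) hint.integrableOn
        measurableSet_Icc (fun x hx => (hcon x hx).le)
    rw [setIntegral_const, Real.volume_real_Icc_of_le (by linarith), smul_eq_mul] at hb2
    have : (11 * t - 2 * t) * (1 / (16 * t)) = 9 / 16 := by field_simp; ring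
    rw [this] at hb2
    linarith
  -- decay
  intro x hx
  have hfx0 : 0 ≤ f x := hpos x
  rcases hfx0.eq_or_lt with h0 | hfx
  · rw [← h0]; positivity
  have hax : a ≤ x := le_trans hamem.2 hx
  rcases hax.eq_or_lt with heq | hax
  · -- a = x forces x = 11t
    have hx11 : x = 11 * t := le_antisymm (heq ▸ hamem.2) hx
    have : -(x - 11 * t) / (18 * t) = 0 := by rw [hx11]; simp
    rw [this, Real.exp_zero, mul_one, ← heq]
    exact ha
  -- main case: a < x
  have hx₀t : x₀ ≤ t := hx₀mem.2
  have hx₀a : x₀ < a := lt_of_le_of_lt hx₀t (by linarith [hamem.1])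
  have hxx₀ : x₀ < x := lt_trans hx₀a hax
  set l : ℝ := (a - x₀) / (x - x₀) with hl
  have hl0 : 0 < l := div_pos (by linarith) (by linarith)
  have hl1 : l < 1 := (div_lt_one (by linarith)).2 (by linarith)
  have hne : x - x₀ ≠ 0 := sub_ne_zero.mpr hxx₀.ne'
  have hcomb : l * x + (1 - l) * x₀ = a := by
    have h2 : l * (x - x₀) = a - x₀ := div_mul_cancel₀ (a - x₀) hne
    linear_combination h2
  clear_value l
  have key := hlc x x₀ l hl0.le hl1.le
  rw [hcomb] at key
  have hfx₀ : 0 < f x₀ := lt_of_lt_of_le (by positivity) hx₀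
  have hprod : 0 < f x ^ l * f x₀ ^ (1 - l) :=
    mul_pos (Real.rpow_pos_of_pos hfx l) (Real.rpow_pos_of_pos hfx₀ (1 - l))
  have hfa : 0 < f a := lt_of_lt_of_le hprod key
  have hlog : l * Real.log (f x) + (1 - l) * Real.log (f x₀) ≤ Real.log (f a) := by
    have := (Real.log_le_log_iff hprod hfa).2 key
    rwa [Real.log_mul (Real.rpow_pos_of_pos hfx l).ne' (Real.rpow_pos_of_pos hfx₀ (1 - l)).ne',
      Real.log_rpow hfx, Real.log_rpow hfx₀] at this
  have hA : Real.log (f a) ≤ Real.log (1 / (16 * t)) :=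
    (Real.log_le_log_iff hfa (by positivity)).2 ha
  have hB : Real.log (1 / (16 * t)) + Real.log 2 ≤ Real.log (f x₀) := by
    have h8 : (1 : ℝ) / (8 * t) = 1 / (16 * t) * 2 := by field_simp; ring
    have := (Real.log_le_log_iff (by positivity) hfx₀).2 hx₀
    rwa [h8, Real.log_mul (by positivity) two_ne_zero] at this
  -- F ≤ A' - ((1-l)/l) log 2
  have hF : Real.log (f x) ≤ Real.log (1 / (16 * t)) - (1 - l) / l * Real.log 2 := by
    have h' : l * Real.log (f x) ≤ l * Real.log (1 / (16 * t)) - (1 - l) * Real.log 2 := by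
      nlinarith [hlog, hA, hB, hl0, hl1]
    have heq2 : Real.log (1 / (16 * t)) - (1 - l) / l * Real.log 2
        = (l * Real.log (1 / (16 * t)) - (1 - l) * Real.log 2) / l := by
      field_simp
    rw [heq2, le_div_iff₀ hl0]
    linarith [h']
  -- rate comparison
  have hrate : (x - 11 * t) / (18 * t) ≤ (1 - l) / l * Real.log 2 := by
    have hfrac : (1 - l) / l = (x - a) / (a - x₀) := by
      rw [div_eq_div_iff hl0.ne' (by linarith : (0:ℝ) < a - x₀).ne', hl]
      field_simp
      ring
    rw [hfrac]
    have hd2 : a - x₀ ≤ 12 * t := by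
      have := hamem.2
      have := hx₀mem.1
      linarith
    have hstep1 : (x - a) / (12 * t) ≤ (x - a) / (a - x₀) :=
      div_le_div_of_nonneg_left (by linarith) (by linarith) hd2
    have hlog2 : (0.6931471803 : ℝ) < Real.log 2 := Real.log_two_gt_d9
    have hx11 : 0 ≤ x - 11 * t := by linarith
    have hxa' : x - 11 * t ≤ x - a := by linarith [hamem.2]
    have hstep2 : (x - 11 * t) / (18 * t) ≤ (x - a) / (12 * t) * Real.log 2 := by
      rw [div_le_iff₀ (by positivity)]
      rw [div_mul_eq_mul_div, div_mul_eq_mul_div, le_div_iff₀ (by positivity)]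
      nlinarith [mul_nonneg (mul_nonneg (sub_nonneg.2 hxa')
          (by linarith : (0:ℝ) ≤ Real.log 2)) ht.le,
        mul_nonneg (mul_nonneg hx11 (by linarith : (0:ℝ) ≤ Real.log 2 - 2/3)) ht.le]
    calc (x - 11 * t) / (18 * t) ≤ (x - a) / (12 * t) * Real.log 2 := hstep2
      _ ≤ (x - a) / (a - x₀) * Real.log 2 :=
        mul_le_mul_of_nonneg_right hstep1 (by positivity)
  -- combine
  have hfinal : Real.log (f x) ≤ Real.log (1 / (16 * t)) + (-(x - 11 * t) / (18 * t)) := by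
    have : -(x - 11 * t) / (18 * t) = -((x - 11 * t) / (18 * t)) := by ring
    rw [this]
    linarith [hF, hrate]
  calc f x = Real.exp (Real.log (f x)) := (Real.exp_log hfx).symm
    _ ≤ Real.exp (Real.log (1 / (16 * t)) + (-(x - 11 * t) / (18 * t))) :=
      Real.exp_le_exp.2 hfinal
    _ = 1 / (16 * t) * Real.exp (-(x - 11 * t) / (18 * t)) := by
      rw [Real.exp_add, Real.exp_log (by positivity)]

lemma tail_int (f : ℝ → ℝ) (hpos : ∀ x, 0 ≤ f x)
    (hlc : ∀ x y (l : ℝ), 0 ≤ l → l ≤ 1 →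
      f (l * x + (1 - l) * y) ≥ f x ^ l * f y ^ (1 - l))
    (hint : Integrable f) (hone : (∫ x, f x) = 1)
    (hint2 : Integrable (fun x => x ^ 2 * f x))
    (hintabs : Integrable (fun x => |x| * f x))
    (t : ℝ) (ht : 0 < t) (hI : (∫ x, |x| * f x) ≤ t / 2) :
    ∫ x in Ioi (11 * t), x ^ 2 * f x ≤ 1311 * t ^ 2 := by
  have hdecay := tail_bound f hpos hlc hint hone hintabs t ht hI
  obtain ⟨hintexp, hval⟩ := expTail (11 * t) (18 * t) (by positivity)
  have hmono : ∫ x in Ioi (11 * t), x ^ 2 * f x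
      ≤ ∫ x in Ioi (11 * t), 1 / (16 * t) * (x ^ 2 * Real.exp (-(x - 11 * t) / (18 * t))) := by
    apply setIntegral_mono_on hint2.integrableOn (hintexp.const_mul _) measurableSet_Ioi
    intro x hx
    calc x ^ 2 * f x
        ≤ x ^ 2 * (1 / (16 * t) * Real.exp (-(x - 11 * t) / (18 * t))) :=
          mul_le_mul_of_nonneg_left (hdecay x (le_of_lt hx)) (sq_nonneg x)
      _ = 1 / (16 * t) * (x ^ 2 * Real.exp (-(x - 11 * t) / (18 * t))) := by ring
  have hval2 : ∫ x in Ioi (11 * t), 1 / (16 * t) * (x ^ 2 * Real.exp (-(x - 11 * t) / (18 * t)))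
      = 1 / (16 * t) * (18 * t * (11 * t) ^ 2 + 2 * (18 * t) ^ 2 * (11 * t) + 2 * (18 * t) ^ 3) := by
    rw [MeasureTheory.integral_const_mul, hval]
  have hfin : 1 / (16 * t) * (18 * t * (11 * t) ^ 2 + 2 * (18 * t) ^ 2 * (11 * t) + 2 * (18 * t) ^ 3)
      ≤ 1311 * t ^ 2 := by
    have : 1 / (16 * t) * (18 * t * (11 * t) ^ 2 + 2 * (18 * t) ^ 2 * (11 * t) + 2 * (18 * t) ^ 3)
        = 20970 / 16 * t ^ 2 := by
      field_simp
      ring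
    rw [this]
    nlinarith [sq_nonneg t]
  linarith [hmono, hval2 ▸ hmono, hfin]

set_option maxHeartbeats 2000000 in
theorem stmt6 :
    ∃ c₁ c₂ : ℝ, 0 < c₁ ∧ 0 < c₂ ∧
      ∀ (f : ℝ → ℝ) (σ : ℝ), (∀ x, 0 ≤ f x) →
        (∀ x y (l : ℝ), 0 ≤ l → l ≤ 1 →
          f (l * x + (1 - l) * y) ≥ f x ^ l * f y ^ (1 - l)) →
        Integrable f → (∫ x, f x) = 1 →
        Integrable (fun x => x * f x) → (∫ x, x * f x) = 0 →
        Integrable (fun x => x ^ 2 * f x) → (∫ x, x ^ 2 * f x) = σ ^ 2 →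
        0 < σ →
        c₁ * σ ≤ (∫ x in Ici (0 : ℝ), x * f x) / (∫ x in Ici (0 : ℝ), f x) ∧
          (∫ x in Ici (0 : ℝ), x * f x) / (∫ x in Ici (0 : ℝ), f x) ≤ c₂ * σ := by
  refine ⟨1/210, 210, by norm_num, by norm_num, ?_⟩
  intro f σ hpos hlc hint hone hxint hzero hint2 hvar hσ
  have habsnn : ∀ x, 0 ≤ |x| * f x := fun x => mul_nonneg (abs_nonneg x) (hpos x)
  have hx2nn : ∀ x, 0 ≤ x ^ 2 * f x := fun x => mul_nonneg (sq_nonneg x) (hpos x)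
  -- integrability of |x| f x
  have hintabs : Integrable (fun x => |x| * f x) := by
    apply Integrable.mono' (hint.add hint2)
      ((continuous_abs.aestronglyMeasurable.mul hint.aestronglyMeasurable :
        AEStronglyMeasurable (fun x => |x| * f x) volume))
    filter_upwards with x
    show ‖|x| * f x‖ ≤ f x + x ^ 2 * f x
    rw [Real.norm_eq_abs, abs_of_nonneg (habsnn x)]
    have h1 : |x| ≤ 1 + x ^ 2 := by nlinarith [sq_abs x, sq_nonneg (|x| - 1), abs_nonneg x]
    calc |x| * f x ≤ (1 + x ^ 2) * f x := mul_le_mul_of_nonneg_right h1 (hpos x)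
      _ = f x + x ^ 2 * f x := by ring
  set m := ∫ x in Ici (0:ℝ), x * f x with hm_def
  set p := ∫ x in Ici (0:ℝ), f x with hp_def
  have hm0 : 0 ≤ m := setIntegral_nonneg measurableSet_Ici (fun x hx => mul_nonneg hx (hpos x))
  have hp0 : 0 ≤ p := setIntegral_nonneg measurableSet_Ici (fun x _ => hpos x)
  have hp1 : p ≤ 1 := by
    have := setIntegral_le_integral (s := Ici (0:ℝ)) hint (Eventually.of_forall hpos)
    rw [hone] at this; exact this
  set I := ∫ x, |x| * f x with hI_def
  -- I = 2 m
  have hI2m : I = 2 * m := by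
    have hsplit1 := integral_add_compl (measurableSet_Ici : MeasurableSet (Ici (0:ℝ))) hintabs
    have hsplit2 := integral_add_compl (measurableSet_Ici : MeasurableSet (Ici (0:ℝ))) hxint
    rw [compl_Ici] at hsplit1 hsplit2
    rw [hzero] at hsplit2
    have e1 : ∫ x in Ici (0:ℝ), |x| * f x = m :=
      setIntegral_congr_fun measurableSet_Ici (fun x hx => by rw [abs_of_nonneg hx])
    have e2 : ∫ x in Iio (0:ℝ), |x| * f x = - ∫ x in Iio (0:ℝ), x * f x := by
      rw [← integral_neg]
      exact setIntegral_congr_fun measurableSet_Iio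
        (fun x hx => by rw [abs_of_neg hx]; ring)
    linarith [hsplit1, hsplit2, e1, e2, hI_def]
  -- I > 0
  have hI0 : 0 < I := by
    rcases (integral_nonneg (f := fun x => |x| * f x) habsnn).eq_or_lt with h | h
    · exfalso
      have hae := (integral_eq_zero_iff_of_nonneg habsnn hintabs).1 h.symm
      have hae2 : (fun x => x ^ 2 * f x) =ᵐ[volume] 0 := by
        filter_upwards [hae] with x hx
        simp only [Pi.zero_apply] at hx ⊢
        have : x ^ 2 * f x = |x| * (|x| * f x) := by
          rw [pow_two, ← abs_mul_abs_self x]; ring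
        rw [this, hx]
        ring
      have : ∫ x, x ^ 2 * f x = 0 := by
        rw [integral_congr_ae hae2]
        simp
      rw [hvar] at this
      nlinarith [hσ]
    · exact h
  set t := 2 * I with ht_def
  have ht : 0 < t := by rw [ht_def]; linarith
  have hIt : I ≤ t / 2 := by rw [ht_def]; linarith
  clear_value I t
  have hIt2 : (∫ x, |x| * f x) ≤ t / 2 := by rw [← hI_def]; exact hIt
  -- right tail
  have hR := tail_int f hpos hlc hint hone hint2 hintabs t ht hIt2
  -- left tail via reflection
  have hL : ∫ x in Iic (-(11 * t)), x ^ 2 * f x ≤ 1311 * t ^ 2 := by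
    set F : ℝ → ℝ := fun x => f (-x) with hF_def
    have hposF : ∀ x, 0 ≤ F x := fun x => hpos (-x)
    have hlcF : ∀ x y (l : ℝ), 0 ≤ l → l ≤ 1 →
        F (l * x + (1 - l) * y) ≥ F x ^ l * F y ^ (1 - l) := by
      intro x y l h0 h1
      have := hlc (-x) (-y) l h0 h1
      have heq : l * -x + (1 - l) * -y = -(l * x + (1 - l) * y) := by ring
      rw [heq] at this
      exact this
    have hintF : Integrable F := hint.comp_neg
    have honeF : (∫ x, F x) = 1 := by
      rw [hF_def]
      rw [integral_neg_eq_self f volume]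
      exact hone
    have hint2F : Integrable (fun x => x ^ 2 * F x) := by
      have h := (hint2.comp_neg : Integrable (fun x => (-x) ^ 2 * f (-x)))
      apply h.congr
      filter_upwards with x
      rw [neg_sq]
    have hintabsF : Integrable (fun x => |x| * F x) := by
      have h := (hintabs.comp_neg : Integrable (fun x => |(-x)| * f (-x)))
      apply h.congr
      filter_upwards with x
      rw [abs_neg]
    have hIF : (∫ x, |x| * F x) = I := by
      rw [hI_def]
      have : (fun x => |x| * F x) = fun x => (fun y => |y| * f y) (-x) := by
        funext x; simp [hF_def, abs_neg]
      rw [this, integral_neg_eq_self (fun y => |y| * f y) volume]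
    have hLF := tail_int F hposF hlcF hintF honeF hint2F hintabsF t ht (by rw [hIF]; exact hIt)
    have hconv : ∫ x in Ioi (11 * t), x ^ 2 * F x = ∫ x in Iic (-(11 * t)), x ^ 2 * f x := by
      have h1 : ∫ x in Ioi (11 * t), x ^ 2 * F x
          = ∫ x in Ioi (11 * t), (fun y => y ^ 2 * f y) (-x) := by
        apply setIntegral_congr_fun measurableSet_Ioi
        intro x _
        simp [hF_def, neg_sq]
      rw [h1]
      exact integral_comp_neg_Ioi (11 * t) (fun y => y ^ 2 * f y)
    rw [← hconv]
    exact hLF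
  -- middle
  have hMid : ∫ x in Ioc (-(11 * t)) (11 * t), x ^ 2 * f x ≤ 11 * t * I := by
    have h1 : ∫ x in Ioc (-(11 * t)) (11 * t), x ^ 2 * f x
        ≤ ∫ x in Ioc (-(11 * t)) (11 * t), 11 * t * (|x| * f x) := by
      apply setIntegral_mono_on hint2.integrableOn (hintabs.const_mul _).integrableOn
        measurableSet_Ioc
      intro x hx
      have hxb : |x| ≤ 11 * t := abs_le.2 ⟨by linarith [hx.1], hx.2⟩
      calc x ^ 2 * f x = |x| * (|x| * f x) := by rw [pow_two, ← abs_mul_abs_self x]; ring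
        _ ≤ 11 * t * (|x| * f x) := mul_le_mul_of_nonneg_right hxb (habsnn x)
    have h2 : ∫ x in Ioc (-(11 * t)) (11 * t), 11 * t * (|x| * f x)
        = 11 * t * ∫ x in Ioc (-(11 * t)) (11 * t), |x| * f x := MeasureTheory.integral_const_mul _ _
    have h3 : ∫ x in Ioc (-(11 * t)) (11 * t), |x| * f x ≤ I := by
      rw [hI_def]
      exact setIntegral_le_integral hintabs (Eventually.of_forall habsnn)
    calc ∫ x in Ioc (-(11 * t)) (11 * t), x ^ 2 * f x
        ≤ 11 * t * ∫ x in Ioc (-(11 * t)) (11 * t), |x| * f x := h2 ▸ h1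
      _ ≤ 11 * t * I := mul_le_mul_of_nonneg_left h3 (by positivity)
  -- splitting
  have hsplit3 := integral_add_compl (measurableSet_Iic : MeasurableSet (Iic (-(11 * t)))) hint2
  rw [compl_Iic, hvar] at hsplit3
  have hsplit4 : ∫ x in Ioi (-(11 * t)), x ^ 2 * f x
      = (∫ x in Ioc (-(11 * t)) (11 * t), x ^ 2 * f x) + ∫ x in Ioi (11 * t), x ^ 2 * f x := by
    rw [← Ioc_union_Ioi_eq_Ioi (by linarith : -(11 * t) ≤ 11 * t)]
    exact setIntegral_union Ioc_disjoint_Ioi_same measurableSet_Ioi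
      hint2.integrableOn hint2.integrableOn
  have hsig : σ ^ 2 ≤ 1311 * t ^ 2 + (11 * t * I + 1311 * t ^ 2) := by
    linarith [hsplit3, hsplit4, hL, hMid, hR]
  have hval : 1311 * t ^ 2 + (11 * t * I + 1311 * t ^ 2) = 42040 * m ^ 2 := by
    rw [ht_def, hI2m]; ring
  have hσ2 : σ ^ 2 ≤ 44100 * m ^ 2 := by nlinarith [hsig, hval, sq_nonneg m]
  have h210 : σ ≤ 210 * m := by
    nlinarith [hσ2, hm0, hσ, sq_nonneg (σ - 210 * m), sq_nonneg (σ + 210 * m)]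
  have hm_pos : 0 < m := by nlinarith [h210, hσ]
  -- AM-GM bound
  have hAM : ∀ u : ℝ, 0 < u → m ≤ 1 / (2 * u) * σ ^ 2 + u / 2 * p := by
    intro u hu
    have h1 : ∀ x ∈ Ici (0:ℝ), x * f x ≤ 1 / (2 * u) * (x ^ 2 * f x) + u / 2 * f x := by
      intro x hx
      have hxu : x ≤ x ^ 2 / (2 * u) + u / 2 := by
        rw [div_add_div _ _ (by positivity : (2:ℝ) * u ≠ 0) (by norm_num : (2:ℝ) ≠ 0)]
        rw [le_div_iff₀ (by positivity)]
        nlinarith [sq_nonneg (x - u)]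
      calc x * f x ≤ (x ^ 2 / (2 * u) + u / 2) * f x :=
            mul_le_mul_of_nonneg_right hxu (hpos x)
        _ = 1 / (2 * u) * (x ^ 2 * f x) + u / 2 * f x := by ring
    have h2 : m ≤ ∫ x in Ici (0:ℝ), (1 / (2 * u) * (x ^ 2 * f x) + u / 2 * f x) :=
      setIntegral_mono_on hxint.integrableOn
        (((hint2.const_mul _).add (hint.const_mul _)).integrableOn) measurableSet_Ici h1
    have h3 : ∫ x in Ici (0:ℝ), (1 / (2 * u) * (x ^ 2 * f x) + u / 2 * f x)
        = 1 / (2 * u) * (∫ x in Ici (0:ℝ), x ^ 2 * f x) + u / 2 * p := by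
      rw [integral_add (hint2.const_mul _).integrableOn (hint.const_mul _).integrableOn,
        MeasureTheory.integral_const_mul, MeasureTheory.integral_const_mul]
    have h4 : ∫ x in Ici (0:ℝ), x ^ 2 * f x ≤ σ ^ 2 := by
      have := setIntegral_le_integral (s := Ici (0:ℝ)) hint2 (Eventually.of_forall hx2nn)
      rw [hvar] at this; exact this
    have h5 : 1 / (2 * u) * (∫ x in Ici (0:ℝ), x ^ 2 * f x) ≤ 1 / (2 * u) * σ ^ 2 :=
      mul_le_mul_of_nonneg_left h4 (by positivity)
    linarith [h2, h3 ▸ h2, h5]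
  -- p > 0
  have hp_pos : 0 < p := by
    rcases hp0.eq_or_lt with h | h
    · exfalso
      have := hAM (σ ^ 2 / m) (by positivity)
      rw [← h] at this
      have e : 1 / (2 * (σ ^ 2 / m)) * σ ^ 2 + (σ ^ 2 / m) / 2 * 0 = m / 2 := by
        field_simp
        ring
      rw [e] at this
      linarith
    · exact h
  -- Cauchy-Schwarz via AM-GM at u = σ / sqrt p
  set s := Real.sqrt p with hs_def
  have hs0 : 0 < s := Real.sqrt_pos.2 hp_pos
  have hss : s * s = p := Real.mul_self_sqrt hp0
  clear_value s
  have hms : m ≤ σ * s := by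
    have := hAM (σ / s) (div_pos hσ hs0)
    have e : 1 / (2 * (σ / s)) * σ ^ 2 + (σ / s) / 2 * p = σ * s := by
      rw [← hss]; field_simp; ring
    rw [e] at this; exact this
  constructor
  · -- lower bound
    have hmp : m ≤ m / p := by
      rw [le_div_iff₀ hp_pos]
      nlinarith [hm0, hp1]
    calc 1 / 210 * σ ≤ m := by linarith [h210]
      _ ≤ m / p := hmp
  · -- upper bound
    have hs210 : 1 / 210 ≤ s := by nlinarith [hms, h210, hσ, hs0, mul_pos hσ hs0]
    have hupper1 : m / p ≤ σ / s := by
      rw [div_le_div_iff₀ hp_pos hs0]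
      have h1 := mul_le_mul_of_nonneg_right hms hs0.le
      rw [mul_assoc, hss] at h1
      linarith
    have hupper2 : σ / s ≤ 210 * σ := by
      rw [div_le_iff₀ hs0]
      nlinarith [mul_le_mul_of_nonneg_left hs210 hσ.le]
    linarith [hupper1, hupper2]
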